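/- Let L be an even lattice of rank 2 and signature (1,1) with Gram matrix ((2n, k), (k, 2m)) such that Δ = k² - 4nm is not a perfect square. Then there exist elements A, B ∈ L and positive integers r₁, r₂ such that A·A > 0, B·B < 0, 2r₂ ∣ A·A, 2r₁ ∣ B·B, and (r₁A - r₂B)² = -2r₁r₂; in fact infinitely many such quadruples (A, B, r₁, r₂) exist. -/
import Mathlib


/-- The symmetric bilinear form on `ℤ × ℤ` with Gram matrix `!![2n, k; k, 2m]`. -/
def gramForm (n k m : ℤ) (v w : ℤ × ℤ) : ℤ :=
  2 * n * v.1 * w.1 + k * (v.1 * w.2 + v.2 * w.1) + 2 * m * v.2 * w.2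

/-- Auxiliary vector `A = (R - x) • B + y • U` built from a Pell solution `(x, y)`. -/
def pellAux (n k m R x y : ℤ) (B : ℤ × ℤ) : ℤ × ℤ :=
  (R * B.1 - x * B.1 - y * (k * B.1 + 2 * m * B.2),
   R * B.2 - x * B.2 + y * (2 * n * B.1 + k * B.2))

lemma pellAux_Q (n k m R x y : ℤ) (B : ℤ × ℤ)
    (hp : x ^ 2 - (k ^ 2 - 4 * n * m) * y ^ 2 = 1)
    (hB : gramForm n k m B B = -(2 * R)) :
    gramForm n k m (pellAux n k m R x y B) (pellAux n k m R x y B)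
      = 2 * R * (2 * R * x - 1 - R ^ 2) := by
  simp only [gramForm, pellAux] at *
  linear_combination (2 * n * B.1 * B.1 + k * (B.1 * B.2 + B.2 * B.1)
      + 2 * m * B.2 * B.2) * hp + (1 - 2 * R * x + R ^ 2) * hB

lemma pellAux_C (n k m R x y : ℤ) (B : ℤ × ℤ)
    (hp : x ^ 2 - (k ^ 2 - 4 * n * m) * y ^ 2 = 1)
    (hB : gramForm n k m B B = -(2 * R)) :
    gramForm n k m ((1 : ℤ) • pellAux n k m R x y B - R • B)
      ((1 : ℤ) • pellAux n k m R x y B - R • B) = -(2 * 1 * R) := by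
  simp only [gramForm, pellAux, Prod.fst_sub, Prod.snd_sub, Prod.smul_fst,
    Prod.smul_snd, smul_eq_mul] at *
  linear_combination (2 * n * B.1 * B.1 + k * (B.1 * B.2 + B.2 * B.1)
      + 2 * m * B.2 * B.2) * hp + hB

theorem stmt_11 (n k m : ℤ) (hpos : 0 < k ^ 2 - 4 * n * m)
    (hns : ¬ ∃ s : ℤ, k ^ 2 - 4 * n * m = s ^ 2) :
    {q : (ℤ × ℤ) × (ℤ × ℤ) × ℤ × ℤ |
      0 < q.2.2.1 ∧ 0 < q.2.2.2 ∧
      0 < gramForm n k m q.1 q.1 ∧ gramForm n k m q.2.1 q.2.1 < 0 ∧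
      (2 * q.2.2.2) ∣ gramForm n k m q.1 q.1 ∧
      (2 * q.2.2.1) ∣ gramForm n k m q.2.1 q.2.1 ∧
      gramForm n k m (q.2.2.1 • q.1 - q.2.2.2 • q.2.1)
        (q.2.2.1 • q.1 - q.2.2.2 • q.2.1) = -(2 * q.2.2.1 * q.2.2.2)}.Infinite := by
  have hdns : ¬ IsSquare (k ^ 2 - 4 * n * m) := by
    rintro ⟨r, hr⟩; exact hns ⟨r, by rw [hr]; ring⟩
  have hn0 : n ≠ 0 := by rintro rfl; exact hns ⟨k, by ring⟩
  obtain ⟨B, R, hR, hB⟩ : ∃ B : ℤ × ℤ, ∃ R : ℤ,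
      0 < R ∧ gramForm n k m B B = -(2 * R) := by
    rcases hn0.lt_or_gt with h | h
    · exact ⟨(1, 0), -n, by omega, by simp only [gramForm]; ring⟩
    · exact ⟨(-k, 2 * n), n * (k ^ 2 - 4 * n * m), mul_pos h hpos,
        by simp only [gramForm]; ring⟩
  obtain ⟨a, ha⟩ := Pell.IsFundamental.exists_of_not_isSquare hpos hdns
  have hax : 2 ≤ a.x := by have := ha.1; omega
  have hay : 0 < a.y := ha.2.1
  have haxpos : 0 < a.x := by omega
  have hypow : ∀ M : ℕ, 0 ≤ (a ^ M).y := by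
    intro M; induction M with
    | zero => simp
    | succ M ih =>
      simp only [pow_succ, Pell.Solution₁.y_mul]
      have h1 := Pell.Solution₁.x_pow_pos haxpos M
      have h3 : 0 ≤ (k ^ 2 - 4 * n * m) * ((a ^ M).y * a.y) := by positivity
      nlinarith [mul_nonneg ih hay.le, mul_pos h1 hay]
  have hxpow : ∀ M : ℕ, (M : ℤ) ≤ (a ^ M).x := by
    intro M; induction M with
    | zero => simp
    | succ M ih =>
      simp only [pow_succ, Pell.Solution₁.x_mul]
      have h1 := Pell.Solution₁.x_pow_pos haxpos M
      have h2 := hypow M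
      have h3 : 0 ≤ (k ^ 2 - 4 * n * m) * ((a ^ M).y * a.y) :=
        mul_nonneg hpos.le (mul_nonneg h2 hay.le)
      have h4 : (a ^ M).x * 2 ≤ (a ^ M).x * a.x :=
        mul_le_mul_of_nonneg_left hax h1.le
      push_cast
      linarith
  have hxmono : StrictMono (fun M : ℕ => (a ^ M).x) := by
    apply strictMono_nat_of_lt_succ
    intro M
    simp only [pow_succ, Pell.Solution₁.x_mul]
    have h1 := Pell.Solution₁.x_pow_pos haxpos M
    have h2 := hypow M
    have h3 : 0 ≤ (k ^ 2 - 4 * n * m) * ((a ^ M).y * a.y) :=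
      mul_nonneg hpos.le (mul_nonneg h2 hay.le)
    have h4 : (a ^ M).x * 2 ≤ (a ^ M).x * a.x :=
      mul_le_mul_of_nonneg_left hax h1.le
    linarith
  set N : ℕ := R.toNat + 1 with hN
  have hXR : ∀ j : ℕ, R < (a ^ (j + N)).x := by
    intro j
    refine lt_of_lt_of_le ?_ (hxpow (j + N))
    have := Int.toNat_of_nonneg hR.le
    push_cast
    omega
  have hprop : ∀ j : ℕ, ((a ^ (j + N)).x) ^ 2
      - (k ^ 2 - 4 * n * m) * ((a ^ (j + N)).y) ^ 2 = 1 := fun j => (a ^ (j + N)).prop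
  apply Set.infinite_of_injective_forall_mem
    (f := fun j : ℕ => (pellAux n k m R (a ^ (j + N)).x (a ^ (j + N)).y B, B, 1, R))
  · intro j j' hjj
    have hA : pellAux n k m R (a ^ (j + N)).x (a ^ (j + N)).y B
        = pellAux n k m R (a ^ (j' + N)).x (a ^ (j' + N)).y B :=
      congrArg Prod.fst hjj
    have hq : gramForm n k m (pellAux n k m R (a ^ (j + N)).x (a ^ (j + N)).y B)
          (pellAux n k m R (a ^ (j + N)).x (a ^ (j + N)).y B)
        = gramForm n k m (pellAux n k m R (a ^ (j' + N)).x (a ^ (j' + N)).y B)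
          (pellAux n k m R (a ^ (j' + N)).x (a ^ (j' + N)).y B) := by rw [hA]
    rw [pellAux_Q n k m R _ _ B (hprop j) hB,
      pellAux_Q n k m R _ _ B (hprop j') hB] at hq
    have h4 : (4 * R ^ 2) * (a ^ (j + N)).x = (4 * R ^ 2) * (a ^ (j' + N)).x := by
      linear_combination hq
    have h5 : (4 * R ^ 2 : ℤ) ≠ 0 := by
      intro h; nlinarith [hR]
    have hx : (a ^ (j + N)).x = (a ^ (j' + N)).x := mul_left_cancel₀ h5 h4
    have := hxmono.injective hx
    omega
  · intro j
    simp only [Set.mem_setOf_eq]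
    have hp := hprop j
    have hx := hXR j
    refine ⟨one_pos, hR, ?_, ?_, ?_, ?_, ?_⟩
    · rw [pellAux_Q n k m R _ _ B hp hB]
      nlinarith [hR, hx]
    · rw [hB]; linarith
    · rw [pellAux_Q n k m R _ _ B hp hB]
      exact ⟨2 * R * (a ^ (j + N)).x - 1 - R ^ 2, by ring⟩
    · rw [hB]; exact ⟨-R, by ring⟩
    · exact pellAux_C n k m R _ _ B hp hB
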